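/- Let m be a nonnegative integer with n + 2m > 4θ. Then there exists C > 0 (depending only on n, m, δ, α, θ) such that for all t ≥ 0, ∫_{{ξ : 0 < |ξ| < ε}} ((e^{λ₊(ξ)t} − e^{λ₋(ξ)t})² / (λ₊(ξ) − λ₋(ξ))²) · |ξ|^{2m} dξ ≤ C·(1+t)^{−(n/2 + m − 2θ)/(α−θ)}. -/

import Mathlib

open MeasureTheory

/-- The eigenvalue `λ₊(ξ)` in the real-eigenvalue (low frequency) regime. -/
noncomputable def lamPlus (n : ℕ) (δ α θ : ℝ) (ξ : EuclideanSpace ℝ (Fin n)) : ℝ :=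
  ‖ξ‖ ^ (2 * θ) / (2 * (1 + ‖ξ‖ ^ (2 * δ))) *
    (-1 + Real.sqrt (1 - 4 * ‖ξ‖ ^ (2 * (α - 2 * θ)) * (1 + ‖ξ‖ ^ (2 * δ))))

/-- The eigenvalue `λ₋(ξ)` in the real-eigenvalue (low frequency) regime. -/
noncomputable def lamMinus (n : ℕ) (δ α θ : ℝ) (ξ : EuclideanSpace ℝ (Fin n)) : ℝ :=
  ‖ξ‖ ^ (2 * θ) / (2 * (1 + ‖ξ‖ ^ (2 * δ))) *
    (-1 - Real.sqrt (1 - 4 * ‖ξ‖ ^ (2 * (α - 2 * θ)) * (1 + ‖ξ‖ ^ (2 * δ))))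

open Set in
/-- Integrability of `x^q * exp(-b x^p)` on `(0,∞)` for any `p > 0`. -/
lemma myIntegrableOn_rpow_mul_exp_neg_mul_rpow {p q b : ℝ} (hp : 0 < p) (hq : -1 < q)
    (hb : 0 < b) :
    IntegrableOn (fun x : ℝ => x ^ q * Real.exp (-b * x ^ p)) (Set.Ioi 0) := by
  have hs : (-1 : ℝ) < (q + 1) / p - 1 := by
    have : 0 < (q + 1) / p := div_pos (by linarith) hp
    linarith
  have hf : IntegrableOn (fun y : ℝ => y ^ ((q + 1) / p - 1) * Real.exp (-b * y ^ (1:ℝ)))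
      (Set.Ioi 0) := integrableOn_rpow_mul_exp_neg_mul_rpow hs one_pos hb
  have h := (integrableOn_Ioi_comp_rpow_iff'
      (fun y : ℝ => y ^ ((q + 1) / p - 1) * Real.exp (-b * y)) (p := p) hp.ne').mpr
      (by simpa [Real.rpow_one] using hf)
  refine h.congr_fun (fun x hx => ?_) measurableSet_Ioi
  have hx0 : (0:ℝ) < x := hx
  beta_reduce
  rw [smul_eq_mul, ← mul_assoc, ← Real.rpow_mul hx0.le, ← Real.rpow_add hx0]
  congr 2
  field_simp
  ring

open Set

set_option maxHeartbeats 1000000 in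
/-- The key pointwise bound on the radial profile. -/
lemma key_bound {α θ δ t y u v s d : ℝ} (hθ : 0 ≤ θ) (hθα : 2*θ < α) (ht : 0 ≤ t)
    (hy0 : 0 < y) (hy1 : y < 1) (hva : v < 1/16)
    (hu : u = y ^ (2*δ)) (hv : v = y ^ (2*(α-2*θ)))
    (hs : s = Real.sqrt (1 - 4*v*(1+u))) (hd : d = y ^ (2*θ) / (2*(1+u)))
    (hδ : 0 ≤ δ) (k M : ℕ) :
    (y:ℝ)^k * ((Real.exp (d*(-1+s)*t) - Real.exp (d*(-1-s)*t))^2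
        / (d*(-1+s) - d*(-1-s))^2 * y^(2*M))
      ≤ 16 * Real.exp 1 * (y ^ ((k:ℝ) + 2*M - 4*θ) * Real.exp (-(1+t)*y^(2*(α-θ)))) := by
  have hu0 : 0 ≤ u := hu ▸ Real.rpow_nonneg hy0.le _
  have hu1 : u ≤ 1 := hu ▸ Real.rpow_le_one hy0.le hy1.le (by linarith)
  have hv0 : 0 ≤ v := hv ▸ Real.rpow_nonneg hy0.le _
  have hxx : 4*v*(1+u) < 1/2 := by nlinarith
  have hxx0 : 0 ≤ 4*v*(1+u) := by positivity
  have hs_lb : 1/2 ≤ s := by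
    rw [hs]
    rw [show (1:ℝ)/2 = Real.sqrt ((1/2)^2) by rw [Real.sqrt_sq]; norm_num]
    exact Real.sqrt_le_sqrt (by nlinarith)
  have hs_ub : s ≤ 1 - (4*v*(1+u))/2 := by
    rw [hs]
    calc Real.sqrt (1 - 4*v*(1+u)) ≤ Real.sqrt ((1 - (4*v*(1+u))/2)^2) :=
          Real.sqrt_le_sqrt (by nlinarith)
      _ = 1 - (4*v*(1+u))/2 := Real.sqrt_sq (by linarith)
  have h2θ : (0:ℝ) < y ^ (2*θ) := Real.rpow_pos_of_pos hy0 _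
  have hd0 : 0 < d := by rw [hd]; exact div_pos h2θ (by linarith)
  have hd_lb : y ^ (2*θ) / 4 ≤ d := by
    rw [hd]
    exact div_le_div_of_nonneg_left h2θ.le (by linarith) (by linarith)
  have hβ0 : 0 ≤ y ^ (2*(α-θ)) := Real.rpow_nonneg hy0.le _
  have hβ1 : y ^ (2*(α-θ)) ≤ 1 := Real.rpow_le_one hy0.le hy1.le (by linarith)
  have h3 : y ^ (2*θ) * v = y ^ (2*(α-θ)) := by
    rw [hv, ← Real.rpow_add hy0]; ring_nf
  have hLp_ub : d*(-1+s) ≤ -(y ^ (2*(α-θ))) := by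
    have h1 : d*(-1+s) ≤ d*(-(4*v*(1+u))/2) :=
      mul_le_mul_of_nonneg_left (by linarith) hd0.le
    have h2 : d*(-(4*v*(1+u))/2) = -(y ^ (2*θ) * v) := by
      rw [hd]; field_simp; ring
    rw [h2, h3] at h1; exact h1
  set A := Real.exp (d*(-1+s)*t) with hA
  set B := Real.exp (d*(-1-s)*t) with hB
  have hB0 : 0 < B := Real.exp_pos _
  have hAB0 : 0 ≤ A - B := by
    have : d*(-1-s)*t ≤ d*(-1+s)*t := by
      apply mul_le_mul_of_nonneg_right _ ht
      apply mul_le_mul_of_nonneg_left _ hd0.le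
      linarith
    simp only [hA, hB, sub_nonneg]
    exact Real.exp_le_exp.mpr this
  have hA0 : 0 < A := Real.exp_pos _
  set E := Real.exp (-(1+t)*y^(2*(α-θ))) with hE
  have hE0 : 0 < E := Real.exp_pos _
  have hsq : (A-B)^2 ≤ Real.exp 1 * E := by
    have h4 : (A-B)^2 ≤ A^2 := by nlinarith
    have h5 : A^2 = Real.exp (2*(d*(-1+s)*t)) := by
      rw [hA, sq, ← Real.exp_add]; ring_nf
    have hexp : 2*(d*(-1+s)*t) ≤ 1 + -(1+t)*y^(2*(α-θ)) := by
      have h6 : d*(-1+s)*t ≤ -(y ^ (2*(α-θ)))*t :=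
        mul_le_mul_of_nonneg_right hLp_ub ht
      nlinarith [mul_nonneg ht hβ0]
    calc (A-B)^2 ≤ A^2 := h4
      _ = Real.exp (2*(d*(-1+s)*t)) := h5
      _ ≤ Real.exp (1 + -(1+t)*y^(2*(α-θ))) := Real.exp_le_exp.mpr hexp
      _ = Real.exp 1 * E := by rw [Real.exp_add]
  have h4θ : (0:ℝ) < y ^ ((4:ℝ)*θ) := Real.rpow_pos_of_pos hy0 _
  have hgap : y ^ (2*θ) / 4 ≤ d*(-1+s) - d*(-1-s) := by
    have : d*(-1+s) - d*(-1-s) = 2*(d*s) := by ring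
    rw [this]
    have h9 : y ^ (2*θ)/4 * 1 ≤ d * (2*s) :=
      mul_le_mul hd_lb (by linarith) (by norm_num) hd0.le
    linarith
  have hD_lb : y ^ ((4:ℝ)*θ) / 16 ≤ (d*(-1+s) - d*(-1-s))^2 := by
    have h7 : (y ^ (2*θ)/4)^2 ≤ (d*(-1+s) - d*(-1-s))^2 :=
      pow_le_pow_left₀ (by positivity) hgap 2
    have h8 : (y ^ (2*θ)/4)^2 = y ^ ((4:ℝ)*θ) / 16 := by
      rw [div_pow, ← Real.rpow_natCast (y ^ (2*θ)) 2, ← Real.rpow_mul hy0.le]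
      norm_num
      ring_nf
    rw [← h8]; exact h7
  have hfrac : (A-B)^2 / (d*(-1+s) - d*(-1-s))^2
      ≤ (Real.exp 1 * E) / (y ^ ((4:ℝ)*θ) / 16) :=
    div_le_div₀ (by positivity) hsq (by positivity) hD_lb
  have hpow : (y:ℝ)^k * y^(2*M) / (y ^ ((4:ℝ)*θ)) = y ^ ((k:ℝ) + 2*M - 4*θ) := by
    rw [← Real.rpow_natCast y k, ← Real.rpow_natCast y (2*M), ← Real.rpow_add hy0,
      ← Real.rpow_sub hy0]
    congr 1
    push_cast
    ring
  calc (y:ℝ)^k * ((A - B)^2 / (d*(-1+s) - d*(-1-s))^2 * y^(2*M))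
      ≤ (y:ℝ)^k * ((Real.exp 1 * E) / (y ^ ((4:ℝ)*θ) / 16) * y^(2*M)) := by
        apply mul_le_mul_of_nonneg_left _ (pow_nonneg hy0.le _)
        exact mul_le_mul_of_nonneg_right hfrac (pow_nonneg hy0.le _)
    _ = 16 * Real.exp 1 * (y ^ ((k:ℝ) + 2*M - 4*θ) * E) := by
        rw [← hpow]
        field_simp

set_option maxHeartbeats 1000000 in
theorem stmt_4 (n : ℕ) (hn : 1 ≤ n) (δ α θ ε : ℝ)
    (hδ : 0 ≤ δ) (hα : 0 < α) (hθ : 0 ≤ θ) (hθα : 2 * θ < α)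
    (hε : 0 < ε) (hεdef : ε ^ (α - 2 * θ) = 1 / 4)
    (m : ℕ) (hm : 4 * θ < (n : ℝ) + 2 * m) :
    ∃ C : ℝ, 0 < C ∧ ∀ t : ℝ, 0 ≤ t →
      (∫ ξ in {ξ : EuclideanSpace ℝ (Fin n) | 0 < ‖ξ‖ ∧ ‖ξ‖ < ε},
          (Real.exp (lamPlus n δ α θ ξ * t) - Real.exp (lamMinus n δ α θ ξ * t)) ^ 2 /
              (lamPlus n δ α θ ξ - lamMinus n δ α θ ξ) ^ 2 * ‖ξ‖ ^ (2 * m))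
        ≤ C * (1 + t) ^ (-((n : ℝ) / 2 + m - 2 * θ) / (α - θ)) := by
  haveI : Nontrivial (EuclideanSpace ℝ (Fin n)) := by
    refine Module.nontrivial_of_finrank_pos (R := ℝ) ?_
    rw [finrank_euclideanSpace_fin]; omega
  have hθα' : θ < α := by linarith
  have hβ : (0:ℝ) < 2*(α-θ) := by linarith
  set q : ℝ := (n:ℝ) + 2*m - 4*θ - 1 with hqdef
  have hq1 : 0 < q + 1 := by rw [hqdef]; push_cast; linarith
  have hq : -1 < q := by linarith
  have hε1 : ε < 1 := by
    by_contra h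
    push_neg at h
    have h1 : (1:ℝ) ≤ ε ^ (α - 2*θ) := by
      have := Real.rpow_le_rpow (by norm_num : (0:ℝ) ≤ 1) h (by linarith : (0:ℝ) ≤ α - 2*θ)
      simpa using this
    rw [hεdef] at h1; linarith
  set c : ℝ := (volume (Metric.ball (0:EuclideanSpace ℝ (Fin n)) 1)).toReal with hcdef
  have hc : 0 < c := ENNReal.toReal_pos
    (Metric.measure_ball_pos volume 0 one_pos).ne' measure_ball_lt_top.ne
  set Γ : ℝ := Real.Gamma ((q+1)/(2*(α-θ))) with hΓdef
  have hΓ : 0 < Γ := Real.Gamma_pos_of_pos (div_pos hq1 hβ)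
  have hn0 : (0:ℝ) < n := by exact_mod_cast hn
  refine ⟨(n:ℝ) * c * (16 * Real.exp 1 * ((1/(2*(α-θ))) * Γ)), by positivity, ?_⟩
  intro t ht
  set gt : ℝ → ℝ := fun y =>
    (Real.exp ((y ^ (2*θ) / (2*(1+y^(2*δ))) *
        (-1 + Real.sqrt (1 - 4*y^(2*(α-2*θ))*(1+y^(2*δ)))))*t)
      - Real.exp ((y ^ (2*θ) / (2*(1+y^(2*δ))) *
        (-1 - Real.sqrt (1 - 4*y^(2*(α-2*θ))*(1+y^(2*δ)))))*t))^2
    / ((y ^ (2*θ) / (2*(1+y^(2*δ))) *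
        (-1 + Real.sqrt (1 - 4*y^(2*(α-2*θ))*(1+y^(2*δ)))))
      - (y ^ (2*θ) / (2*(1+y^(2*δ))) *
        (-1 - Real.sqrt (1 - 4*y^(2*(α-2*θ))*(1+y^(2*δ))))))^2
    * y ^ (2*m) with hgt
  set M : ℝ → ℝ := fun y => 16 * Real.exp 1 * (y ^ q * Real.exp (-(1+t)*y^(2*(α-θ)))) with hM
  -- the pointwise bound
  have hbound : ∀ y ∈ Ioo (0:ℝ) ε, y ^ (n-1) * gt y ≤ M y := by
    intro y hy
    have hy0 : 0 < y := hy.1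
    have hy1 : y < 1 := lt_trans hy.2 hε1
    have hva : y ^ (2*(α-2*θ)) < 1/16 := by
      have ha : y ^ (α-2*θ) < 1/4 := by
        rw [← hεdef]
        exact Real.rpow_lt_rpow hy0.le hy.2 (by linarith)
      have ha0 : 0 ≤ y ^ (α-2*θ) := Real.rpow_nonneg hy0.le _
      have h2 : y ^ (2*(α-2*θ)) = (y ^ (α-2*θ))^(2:ℕ) := by
        rw [← Real.rpow_natCast (y ^ (α-2*θ)) 2, ← Real.rpow_mul hy0.le]
        norm_num
        ring_nf
      rw [h2]
      nlinarith
    have hkey := key_bound (t := t) (y := y) hθ hθα ht hy0 hy1 hva rfl rfl rfl rfl hδ (n-1) m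
    have hqq : ((n-1:ℕ):ℝ) + 2*m - 4*θ = q := by
      rw [hqdef, Nat.cast_sub hn]
      push_cast
      ring
    rw [hqq] at hkey
    exact hkey
  have hgt_nonneg : ∀ y ∈ Ioo (0:ℝ) ε, 0 ≤ y ^ (n-1) * gt y := by
    intro y hy
    have hy0 : 0 < y := hy.1
    apply mul_nonneg (pow_nonneg hy0.le _)
    apply mul_nonneg (div_nonneg (sq_nonneg _) (sq_nonneg _)) (pow_nonneg hy0.le _)
  -- integrability of the majorant
  have hMint : IntegrableOn M (Ioi (0:ℝ)) := by
    rw [hM]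
    exact (myIntegrableOn_rpow_mul_exp_neg_mul_rpow hβ hq (by linarith)).const_mul _
  have hMint' : IntegrableOn M (Ioo (0:ℝ) ε) := hMint.mono_set Ioo_subset_Ioi_self
  -- measurability of the integrand
  have hgt_meas : Measurable fun y : ℝ => y ^ (n-1) * gt y := by
    rw [hgt]
    fun_prop
  have hfint : IntegrableOn (fun y : ℝ => y ^ (n-1) * gt y) (Ioo (0:ℝ) ε) := by
    apply Integrable.mono' hMint' hgt_meas.aestronglyMeasurable
    filter_upwards [ae_restrict_mem measurableSet_Ioo] with y hy
    rw [Real.norm_eq_abs, abs_of_nonneg (hgt_nonneg y hy)]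
    exact hbound y hy
  -- the set is measurable
  have hSmeas : MeasurableSet {ξ : EuclideanSpace ℝ (Fin n) | 0 < ‖ξ‖ ∧ ‖ξ‖ < ε} := by
    have : {ξ : EuclideanSpace ℝ (Fin n) | 0 < ‖ξ‖ ∧ ‖ξ‖ < ε}
        = (fun ξ : EuclideanSpace ℝ (Fin n) => ‖ξ‖) ⁻¹' (Ioo 0 ε) := rfl
    rw [this]
    exact measurable_norm measurableSet_Ioo
  have hexp_eq : -(q+1)/(2*(α-θ)) = -((n : ℝ) / 2 + m - 2 * θ) / (α - θ) := by
    rw [hqdef]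
    field_simp
    ring
  calc (∫ ξ in {ξ : EuclideanSpace ℝ (Fin n) | 0 < ‖ξ‖ ∧ ‖ξ‖ < ε},
          (Real.exp (lamPlus n δ α θ ξ * t) - Real.exp (lamMinus n δ α θ ξ * t)) ^ 2 /
              (lamPlus n δ α θ ξ - lamMinus n δ α θ ξ) ^ 2 * ‖ξ‖ ^ (2 * m))
      = ∫ ξ : EuclideanSpace ℝ (Fin n), (Set.indicator (Ioo 0 ε) gt) ‖ξ‖ := by
        rw [← integral_indicator hSmeas]
        congr 1
    _ = (n:ℝ) * (c * ∫ y in Ioi (0:ℝ), y ^ (n-1) * (Set.indicator (Ioo 0 ε) gt) y) := by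
        rw [integral_fun_norm_addHaar volume (Set.indicator (Ioo 0 ε) gt)]
        simp only [finrank_euclideanSpace_fin, nsmul_eq_mul, smul_eq_mul, ← hcdef]
        rfl
    _ = (n:ℝ) * (c * ∫ y in Ioo (0:ℝ) ε, y ^ (n-1) * gt y) := by
        congr 2
        have heq : ∀ y : ℝ, y ^ (n-1) * (Set.indicator (Ioo 0 ε) gt) y
            = Set.indicator (Ioo (0:ℝ) ε) (fun z => z ^ (n-1) * gt z) y := by
          intro y
          by_cases h : y ∈ Ioo (0:ℝ) ε
          · rw [Set.indicator_of_mem h, Set.indicator_of_mem h]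
          · rw [Set.indicator_of_notMem h, Set.indicator_of_notMem h, mul_zero]
        simp_rw [heq]
        rw [setIntegral_indicator measurableSet_Ioo,
          Set.inter_eq_self_of_subset_right Set.Ioo_subset_Ioi_self]
    _ ≤ (n:ℝ) * (c * ∫ y in Ioi (0:ℝ), M y) := by
        apply mul_le_mul_of_nonneg_left _ hn0.le
        apply mul_le_mul_of_nonneg_left _ hc.le
        calc (∫ y in Ioo (0:ℝ) ε, y ^ (n-1) * gt y)
            ≤ ∫ y in Ioo (0:ℝ) ε, M y :=
              setIntegral_mono_on hfint hMint' measurableSet_Ioo hbound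
          _ ≤ ∫ y in Ioi (0:ℝ), M y := by
              apply setIntegral_mono_set hMint
              · filter_upwards [ae_restrict_mem measurableSet_Ioi] with y hy
                have hy0 : (0:ℝ) < y := hy
                rw [hM]
                have := Real.rpow_nonneg hy0.le q
                positivity
              · exact HasSubset.Subset.eventuallyLE Set.Ioo_subset_Ioi_self
    _ = (n:ℝ) * c * (16 * Real.exp 1 * ((1/(2*(α-θ))) * Γ))
          * (1 + t) ^ (-((n : ℝ) / 2 + m - 2 * θ) / (α - θ)) := by
        rw [hM]
        simp_rw [integral_const_mul]
        rw [integral_rpow_mul_exp_neg_mul_rpow hβ hq (by linarith : (0:ℝ) < 1 + t), hexp_eq]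
        ring
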